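/- In the bicategory of relations Bicat_P of an elementary existential doctrine P, every morphism R ∈ P(X×Y) is a lax comonoid homomorphism: R ; Δ_Y ≤ Δ_X ; (R ⊗ R) and R ; !_Y ≤ !_X, where Δ and ! are transported from C along the graph functor and the tensor of relations is R ⊗ S = P_{⟨π1,π3⟩}(R) ∧ P_{⟨π2,π4⟩}(S). -/

import Mathlib

open CategoryTheory CategoryTheory.Limits

universe v u w

/-- An elementary existential doctrine on a cartesian category `C`:
a contravariant functor into inf-semilattices with top, equipped with equality
predicates `δ`, and left adjoints to reindexing along both product projections,
satisfying Beck–Chevalley, Frobenius reciprocity and the elementarity condition. -/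
structure EED (C : Type u) [Category.{v} C] [HasFiniteProducts C] where
  obj : C → Type w
  semi : ∀ A : C, SemilatticeInf (obj A)
  otop : ∀ A : C, OrderTop (obj A)
  map : ∀ {A B : C}, (A ⟶ B) → obj B → obj A
  map_id : ∀ (A : C) (α : obj A), map (𝟙 A) α = α
  map_comp : ∀ {A B D : C} (f : A ⟶ B) (g : B ⟶ D) (α : obj D),
    map (f ≫ g) α = map f (map g α)
  map_inf : ∀ {A B : C} (f : A ⟶ B) (α β : obj B), map f (α ⊓ β) = map f α ⊓ map f β
  map_top : ∀ {A B : C} (f : A ⟶ B), map f (⊤ : obj B) = (⊤ : obj A)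
  /-- the equality predicate -/
  δ : ∀ A : C, obj (A ⨯ A)
  /-- existential quantification along the first projection (quantifying away the
  second factor) -/
  exFst : ∀ {X A : C}, obj (X ⨯ A) → obj X
  exFst_adj : ∀ {X A : C} (β : obj (X ⨯ A)) (α : obj X),
    exFst β ≤ α ↔ β ≤ map prod.fst α
  /-- existential quantification along the second projection -/
  exSnd : ∀ {X A : C}, obj (X ⨯ A) → obj A
  exSnd_adj : ∀ {X A : C} (β : obj (X ⨯ A)) (α : obj A),
    exSnd β ≤ α ↔ β ≤ map prod.snd α
  bcFst : ∀ {X X' A : C} (f : X' ⟶ X) (β : obj (X ⨯ A)),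
    exFst (map (prod.map f (𝟙 A)) β) = map f (exFst β)
  bcSnd : ∀ {X A A' : C} (f : A' ⟶ A) (β : obj (X ⨯ A)),
    exSnd (map (prod.map (𝟙 X) f) β) = map f (exSnd β)
  frobFst : ∀ {X A : C} (α : obj X) (β : obj (X ⨯ A)),
    exFst (map prod.fst α ⊓ β) = α ⊓ exFst β
  frobSnd : ∀ {X A : C} (α : obj A) (β : obj (X ⨯ A)),
    exSnd (map prod.snd α ⊓ β) = α ⊓ exSnd β
  /-- elementarity: `α ↦ P_{⟨π₁,π₂⟩}(α) ⊓ P_{⟨π₂,π₃⟩}(δ_A)` is left adjoint to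
  reindexing along `id_X × Δ_A`. -/
  elem : ∀ {X A : C} (α : obj (X ⨯ A)) (γ : obj (X ⨯ (A ⨯ A))),
    (map (prod.map (𝟙 X) prod.fst) α ⊓ map prod.snd (δ A) ≤ γ) ↔
      α ≤ map (prod.map (𝟙 X) (diag A)) γ

attribute [instance] EED.semi EED.otop

variable {C : Type u} [Category.{v} C] [HasFiniteProducts C]

namespace EED

/-- Composition in the bicategory of relations `Bicat_P`: realised using the
ambient object `(X ⨯ Z) ⨯ Y` and existential quantification of the middle factor. -/
noncomputable def rcomp (P : EED C) {X Y Z : C} (R : P.obj (X ⨯ Y)) (S : P.obj (Y ⨯ Z)) :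
    P.obj (X ⨯ Z) :=
  P.exFst (P.map (prod.lift (prod.fst ≫ prod.fst) prod.snd) R ⊓
    P.map (prod.lift prod.snd (prod.fst ≫ prod.snd)) S)

/-- The graph of a morphism of the base category. -/
noncomputable def graph (P : EED C) {X Y : C} (f : X ⟶ Y) : P.obj (X ⨯ Y) :=
  P.map (prod.map f (𝟙 Y)) (P.δ Y)

/-- Tensor product of relations in `Bicat_P`. -/
noncomputable def rtensor (P : EED C) {X Y X' Y' : C} (R : P.obj (X ⨯ Y)) (S : P.obj (X' ⨯ Y')) :
    P.obj ((X ⨯ X') ⨯ (Y ⨯ Y')) :=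
  P.map (prod.map prod.fst prod.fst) R ⊓ P.map (prod.map prod.snd prod.snd) S

end EED


namespace EED

variable (P : EED C)

lemma mono {A B : C} (f : A ⟶ B) {α β : P.obj B} (h : α ≤ β) :
    P.map f α ≤ P.map f β := by
  have : P.map f α ⊓ P.map f β = P.map f α := by
    rw [← P.map_inf, inf_eq_left.mpr h]
  exact inf_eq_left.mp this

lemma map_map {A B D : C} (f : A ⟶ B) (g : B ⟶ D) {h : A ⟶ D} (w : f ≫ g = h)
    (α : P.obj D) : P.map f (P.map g α) = P.map h α := by
  rw [← w, P.map_comp]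

lemma map_eqmor {A B : C} {f g : A ⟶ B} (w : f = g) (α : P.obj B) :
    P.map f α = P.map g α := by rw [w]

lemma exFst_mono {X A : C} {β β' : P.obj (X ⨯ A)} (h : β ≤ β') :
    P.exFst β ≤ P.exFst β' :=
  (P.exFst_adj _ _).mpr (h.trans ((P.exFst_adj β' _).mp le_rfl))

lemma exFst_intro {W A : C} (u : W ⟶ A) (β : P.obj (W ⨯ A)) :
    P.map (prod.lift (𝟙 W) u) β ≤ P.exFst β := by
  have h := (P.exFst_adj β (P.exFst β)).mp le_rfl
  have h2 := P.mono (prod.lift (𝟙 W) u) h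
  rwa [P.map_map _ _ (prod.lift_fst _ _), P.map_id] at h2

lemma refl (A : C) : (⊤ : P.obj A) ≤ P.map (diag A) (P.δ A) := by
  have h : P.map (prod.map (𝟙 A) prod.fst) (⊤ : P.obj (A ⨯ A)) ⊓ P.map prod.snd (P.δ A)
      ≤ P.map (prod.map (𝟙 A) prod.fst) (⊤ : P.obj (A ⨯ A)) ⊓ P.map prod.snd (P.δ A) := le_rfl
  have h2 := (P.elem ⊤ _).mp h
  rw [P.map_inf, P.map_top, P.map_map _ _ (by simp : prod.map (𝟙 A) (diag A) ≫ (prod.snd : A ⨯ (A ⨯ A) ⟶ A ⨯ A) = prod.snd ≫ diag A)] at h2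
  have h3 := P.mono (diag A) h2
  rw [P.map_top, P.map_inf,
    P.map_map _ _ (by simp [prod.lift_fst, prod.lift_snd, prod.lift_fst_assoc, prod.lift_snd_assoc] : diag A ≫ (prod.snd ≫ diag A) = diag A)] at h3
  exact h3.trans inf_le_right

lemma refl' {W A : C} (u : W ⟶ A) : (⊤ : P.obj W) ≤ P.map (prod.lift u u) (P.δ A) := by
  have h := P.mono u (P.refl A)
  rwa [P.map_top, P.map_map _ _ (by simp [diag] : u ≫ diag A = prod.lift u u)] at h

lemma lawvere {X A : C} (β : P.obj (X ⨯ A)) :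
    P.map (prod.map (𝟙 X) prod.fst) β ⊓ P.map prod.snd (P.δ A) ≤
      P.map (prod.map (𝟙 X) prod.snd) β := by
  refine (P.elem β _).mpr ?_
  rw [P.map_map _ _ (by simp [prod.lift_fst, prod.lift_snd, prod.lift_fst_assoc, prod.lift_snd_assoc] : prod.map (𝟙 X) (diag A) ≫ prod.map (𝟙 X) prod.snd = 𝟙 _), P.map_id]

lemma subst {W X A : C} (g : W ⟶ X) (h k : W ⟶ A) (β : P.obj (X ⨯ A)) :
    P.map (prod.lift g h) β ⊓ P.map (prod.lift h k) (P.δ A) ≤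
      P.map (prod.lift g k) β := by
  have hl := P.mono (prod.lift g (prod.lift h k)) (P.lawvere β)
  rwa [P.map_inf,
    P.map_map _ _ (by simp [prod.lift_fst, prod.lift_snd, prod.lift_fst_assoc, prod.lift_snd_assoc] : prod.lift g (prod.lift h k) ≫ prod.map (𝟙 X) prod.fst = prod.lift g h),
    P.map_map _ _ (by simp [prod.lift_fst, prod.lift_snd, prod.lift_fst_assoc, prod.lift_snd_assoc] : prod.lift g (prod.lift h k) ≫ (prod.snd : X ⨯ (A ⨯ A) ⟶ A ⨯ A) = prod.lift h k),
    P.map_map _ _ (by simp [prod.lift_fst, prod.lift_snd, prod.lift_fst_assoc, prod.lift_snd_assoc] : prod.lift g (prod.lift h k) ≫ prod.map (𝟙 X) prod.snd = prod.lift g k)] at hl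

lemma substFst {W X A : C} (g : W ⟶ X) (h k : W ⟶ A) (β : P.obj (A ⨯ X)) :
    P.map (prod.lift h g) β ⊓ P.map (prod.lift h k) (P.δ A) ≤
      P.map (prod.lift k g) β := by
  have hs := P.subst g h k (P.map (prod.lift (prod.snd : X ⨯ A ⟶ A) prod.fst) β)
  rwa [P.map_map _ _ (by simp [prod.lift_fst, prod.lift_snd, prod.lift_fst_assoc, prod.lift_snd_assoc] : prod.lift g h ≫ prod.lift (prod.snd : X ⨯ A ⟶ A) prod.fst = prod.lift h g),
    P.map_map _ _ (by simp [prod.lift_fst, prod.lift_snd, prod.lift_fst_assoc, prod.lift_snd_assoc] : prod.lift g k ≫ prod.lift (prod.snd : X ⨯ A ⟶ A) prod.fst = prod.lift k g)] at hs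

lemma delta_comp {W A B : C} (u v : W ⟶ A) (f : A ⟶ B) :
    P.map (prod.lift u v) (P.δ A) ≤ P.map (prod.lift (u ≫ f) (v ≫ f)) (P.δ B) := by
  have hs := P.subst (u ≫ f) u v (P.map (prod.lift (prod.fst : B ⨯ A ⟶ B) (prod.snd ≫ f)) (P.δ B))
  rw [P.map_map _ _ (by simp [prod.lift_fst, prod.lift_snd, prod.lift_fst_assoc, prod.lift_snd_assoc] : prod.lift (u ≫ f) u ≫ prod.lift (prod.fst : B ⨯ A ⟶ B) (prod.snd ≫ f) = prod.lift (u ≫ f) (u ≫ f)),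
    P.map_map _ _ (by simp [prod.lift_fst, prod.lift_snd, prod.lift_fst_assoc, prod.lift_snd_assoc] : prod.lift (u ≫ f) v ≫ prod.lift (prod.fst : B ⨯ A ⟶ B) (prod.snd ≫ f) = prod.lift (u ≫ f) (v ≫ f))] at hs
  refine le_trans ?_ hs
  refine le_inf (le_trans le_top (P.refl' (u ≫ f))) le_rfl

end EED

/-- In `Bicat_P`, every relation `R ∈ P(X ⨯ Y)` is a lax comonoid homomorphism
with respect to the comonoids transported from `C` along the graph functor:
`R ; Δ_Y ≤ Δ_X ; (R ⊗ R)` and `R ; !_Y ≤ !_X`. -/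
theorem every_relation_lax_comonoid_hom (P : EED C) {X Y : C} (R : P.obj (X ⨯ Y)) :
    P.rcomp R (P.graph (diag Y)) ≤
      P.rcomp (P.graph (diag X)) (P.rtensor R R) ∧
    P.rcomp R (P.graph (terminal.from Y)) ≤ P.graph (terminal.from X) := by
  constructor
  · -- Step A : R ; Δ_Y ≤ M where M := P_{⟨π₁,π₂∘π₁⟩}R ⊓ P_{⟨π₁,π₂∘π₂⟩}R
    have stepA :
        P.exFst (P.map (prod.lift (prod.fst ≫ prod.fst) prod.snd) R ⊓
          P.map (prod.lift prod.snd (prod.fst ≫ prod.snd)) (P.graph (diag Y))) ≤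
        P.map (prod.lift prod.fst (prod.snd ≫ prod.fst)) R ⊓
          P.map (prod.lift prod.fst (prod.snd ≫ prod.snd)) R := by
      rw [P.exFst_adj, P.map_inf,
        P.map_map _ _ (by apply Limits.prod.hom_ext <;> simp :
          (prod.fst : (X ⨯ (Y ⨯ Y)) ⨯ Y ⟶ X ⨯ (Y ⨯ Y)) ≫
              prod.lift prod.fst (prod.snd ≫ prod.fst)
            = prod.lift (prod.fst ≫ prod.fst) (prod.fst ≫ prod.snd ≫ prod.fst)),
        P.map_map _ _ (by apply Limits.prod.hom_ext <;> simp :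
          (prod.fst : (X ⨯ (Y ⨯ Y)) ⨯ Y ⟶ X ⨯ (Y ⨯ Y)) ≫
              prod.lift prod.fst (prod.snd ≫ prod.snd)
            = prod.lift (prod.fst ≫ prod.fst) (prod.fst ≫ prod.snd ≫ prod.snd))]
      have hG : P.map (prod.lift prod.snd (prod.fst ≫ prod.snd)) (P.graph (diag Y)) ≤
          P.map (prod.lift (prod.snd : (X ⨯ (Y ⨯ Y)) ⨯ Y ⟶ Y)
              (prod.fst ≫ prod.snd ≫ prod.fst)) (P.δ Y) ⊓
            P.map (prod.lift (prod.snd : (X ⨯ (Y ⨯ Y)) ⨯ Y ⟶ Y)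
              (prod.fst ≫ prod.snd ≫ prod.snd)) (P.δ Y) := by
        rw [EED.graph, P.map_map _ _ (by apply Limits.prod.hom_ext <;> simp :
          (prod.lift prod.snd (prod.fst ≫ prod.snd) :
              (X ⨯ (Y ⨯ Y)) ⨯ Y ⟶ Y ⨯ (Y ⨯ Y)) ≫ prod.map (diag Y) (𝟙 (Y ⨯ Y))
            = prod.lift (prod.snd ≫ diag Y) (prod.fst ≫ prod.snd))]
        refine le_inf ?_ ?_
        · refine (P.delta_comp (prod.snd ≫ diag Y) (prod.fst ≫ prod.snd)
            (prod.fst : Y ⨯ Y ⟶ Y)).trans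
            (le_of_eq (P.map_eqmor (by apply Limits.prod.hom_ext <;> simp [prod.lift_fst, prod.lift_snd, prod.lift_fst_assoc, prod.lift_snd_assoc]) _))
        · refine (P.delta_comp (prod.snd ≫ diag Y) (prod.fst ≫ prod.snd)
            (prod.snd : Y ⨯ Y ⟶ Y)).trans
            (le_of_eq (P.map_eqmor (by apply Limits.prod.hom_ext <;> simp [prod.lift_fst, prod.lift_snd, prod.lift_fst_assoc, prod.lift_snd_assoc]) _))
      refine le_trans (inf_le_inf le_rfl hG) (le_inf ?_ ?_)
      · exact (inf_le_inf le_rfl inf_le_left).trans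
          (P.subst (prod.fst ≫ prod.fst) prod.snd (prod.fst ≫ prod.snd ≫ prod.fst) R)
      · exact (inf_le_inf le_rfl inf_le_right).trans
          (P.subst (prod.fst ≫ prod.fst) prod.snd (prod.fst ≫ prod.snd ≫ prod.snd) R)
    -- Step B : M ≤ Δ_X ; (R ⊗ R)
    have stepB :
        P.map (prod.lift prod.fst (prod.snd ≫ prod.fst)) R ⊓
          P.map (prod.lift prod.fst (prod.snd ≫ prod.snd)) R ≤
        P.exFst (P.map (prod.lift (prod.fst ≫ prod.fst) prod.snd) (P.graph (diag X)) ⊓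
          P.map (prod.lift prod.snd (prod.fst ≫ prod.snd)) (P.rtensor R R)) := by
      set M := P.map (prod.lift prod.fst (prod.snd ≫ prod.fst)) R ⊓
        P.map (prod.lift prod.fst (prod.snd ≫ prod.snd)) R with hMdef
      set B0 := P.map (prod.lift (prod.fst ≫ prod.fst) prod.snd :
          ((X ⨯ (Y ⨯ Y)) ⨯ (X ⨯ X)) ⟶ X ⨯ (X ⨯ X)) (P.graph (diag X)) with hB0def
      have hB0 : B0 = P.map (prod.lift (prod.fst ≫ prod.fst ≫ diag X) prod.snd :
          ((X ⨯ (Y ⨯ Y)) ⨯ (X ⨯ X)) ⟶ (X ⨯ X) ⨯ (X ⨯ X)) (P.δ (X ⨯ X)) := by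
        rw [hB0def, EED.graph, P.map_map _ _ (by apply Limits.prod.hom_ext <;> simp :
          (prod.lift (prod.fst ≫ prod.fst) prod.snd :
              ((X ⨯ (Y ⨯ Y)) ⨯ (X ⨯ X)) ⟶ X ⨯ (X ⨯ X)) ≫ prod.map (diag X) (𝟙 (X ⨯ X))
            = prod.lift (prod.fst ≫ prod.fst ≫ diag X) prod.snd)]
      have htop : (⊤ : P.obj (X ⨯ (Y ⨯ Y))) ≤ P.exFst B0 := by
        refine le_trans ?_ (P.exFst_intro (prod.fst ≫ diag X) B0)
        rw [hB0, P.map_map _ _ (by apply Limits.prod.hom_ext <;> simp [prod.lift_fst, prod.lift_snd, prod.lift_fst_assoc, prod.lift_snd_assoc] :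
          (prod.lift (𝟙 (X ⨯ (Y ⨯ Y))) (prod.fst ≫ diag X)) ≫
              (prod.lift (prod.fst ≫ prod.fst ≫ diag X) prod.snd :
                ((X ⨯ (Y ⨯ Y)) ⨯ (X ⨯ X)) ⟶ (X ⨯ X) ⨯ (X ⨯ X))
            = prod.lift (prod.fst ≫ diag X) (prod.fst ≫ diag X))]
        exact P.refl' (prod.fst ≫ diag X)
      have hM : M ≤ P.exFst (P.map prod.fst M ⊓ B0) := by
        rw [P.frobFst M B0]
        exact le_inf le_rfl (le_trans le_top htop)
      refine hM.trans (P.exFst_mono (le_inf (inf_le_right) ?_))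
      -- remains : map fst M ⊓ B0 ≤ map b' (rtensor R R)
      rw [P.map_inf,
        P.map_map _ _ (by apply Limits.prod.hom_ext <;> simp :
          (prod.fst : ((X ⨯ (Y ⨯ Y)) ⨯ (X ⨯ X)) ⟶ X ⨯ (Y ⨯ Y)) ≫
              prod.lift prod.fst (prod.snd ≫ prod.fst)
            = prod.lift (prod.fst ≫ prod.fst) (prod.fst ≫ prod.snd ≫ prod.fst)),
        P.map_map _ _ (by apply Limits.prod.hom_ext <;> simp :
          (prod.fst : ((X ⨯ (Y ⨯ Y)) ⨯ (X ⨯ X)) ⟶ X ⨯ (Y ⨯ Y)) ≫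
              prod.lift prod.fst (prod.snd ≫ prod.snd)
            = prod.lift (prod.fst ≫ prod.fst) (prod.fst ≫ prod.snd ≫ prod.snd))]
      have hB0le : B0 ≤
          P.map (prod.lift (prod.fst ≫ prod.fst)
            (prod.snd ≫ prod.fst : ((X ⨯ (Y ⨯ Y)) ⨯ (X ⨯ X)) ⟶ X)) (P.δ X) ⊓
          P.map (prod.lift (prod.fst ≫ prod.fst)
            (prod.snd ≫ prod.snd : ((X ⨯ (Y ⨯ Y)) ⨯ (X ⨯ X)) ⟶ X)) (P.δ X) := by
        rw [hB0]
        refine le_inf ?_ ?_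
        · refine (P.delta_comp (prod.fst ≫ prod.fst ≫ diag X) prod.snd
            (prod.fst : X ⨯ X ⟶ X)).trans
            (le_of_eq (P.map_eqmor (by apply Limits.prod.hom_ext <;> simp [prod.lift_fst, prod.lift_snd, prod.lift_fst_assoc, prod.lift_snd_assoc]) _))
        · refine (P.delta_comp (prod.fst ≫ prod.fst ≫ diag X) prod.snd
            (prod.snd : X ⨯ X ⟶ X)).trans
            (le_of_eq (P.map_eqmor (by apply Limits.prod.hom_ext <;> simp [prod.lift_fst, prod.lift_snd, prod.lift_fst_assoc, prod.lift_snd_assoc]) _))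
      rw [EED.rtensor, P.map_inf,
        P.map_map _ _ (by apply Limits.prod.hom_ext <;> simp :
          (prod.lift prod.snd (prod.fst ≫ prod.snd) :
              ((X ⨯ (Y ⨯ Y)) ⨯ (X ⨯ X)) ⟶ (X ⨯ X) ⨯ (Y ⨯ Y)) ≫
              prod.map prod.fst prod.fst
            = prod.lift (prod.snd ≫ prod.fst) (prod.fst ≫ prod.snd ≫ prod.fst)),
        P.map_map _ _ (by apply Limits.prod.hom_ext <;> simp :
          (prod.lift prod.snd (prod.fst ≫ prod.snd) :
              ((X ⨯ (Y ⨯ Y)) ⨯ (X ⨯ X)) ⟶ (X ⨯ X) ⨯ (Y ⨯ Y)) ≫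
              prod.map prod.snd prod.snd
            = prod.lift (prod.snd ≫ prod.snd) (prod.fst ≫ prod.snd ≫ prod.snd))]
      refine le_inf ?_ ?_
      · refine le_trans (le_inf
          (inf_le_left.trans inf_le_left)
          (inf_le_right.trans (hB0le.trans inf_le_left))) ?_
        exact P.substFst (prod.fst ≫ prod.snd ≫ prod.fst)
          (prod.fst ≫ prod.fst) (prod.snd ≫ prod.fst) R
      · refine le_trans (le_inf
          (inf_le_left.trans inf_le_right)
          (inf_le_right.trans (hB0le.trans inf_le_right))) ?_
        exact P.substFst (prod.fst ≫ prod.snd ≫ prod.snd)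
          (prod.fst ≫ prod.fst) (prod.snd ≫ prod.snd) R
    exact le_trans stepA stepB
  · refine le_trans le_top ?_
    rw [EED.graph, P.map_eqmor
      (show prod.map (terminal.from X) (𝟙 (⊤_ C)) =
          prod.lift (terminal.from (X ⨯ ⊤_ C)) (terminal.from (X ⨯ ⊤_ C)) by
        apply Limits.prod.hom_ext <;> exact Subsingleton.elim _ _)]
    exact P.refl' (terminal.from (X ⨯ ⊤_ C))
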